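/- Let {F_n} be a sequence in Δ⁺ and let F ∈ Δ⁺. Then {F_n} converges weakly to F (i.e., F_n(x) → F(x) at every continuity point x of F) if and only if d_L(F_n, F) → 0 as n → ∞. -/
import Mathlib


open Set Filter Topology

/-- A distance distribution function: nondecreasing, left-continuous,
with values in `[0,1]`, and vanishing on `(-∞, 0]`. -/
def IsDDF (F : ℝ → ℝ) : Prop :=
  Monotone F ∧ (∀ x : ℝ, ContinuousWithinAt F (Set.Iio x) x) ∧
    (∀ x, 0 ≤ F x ∧ F x ≤ 1) ∧ ∀ x ≤ 0, F x = 0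

/-- The condition `(F, G; h)` in the definition of the modified Lévy distance. -/
def LevyCond (F G : ℝ → ℝ) (h : ℝ) : Prop :=
  ∀ x ∈ Set.Ioo (-(1 / h)) (1 / h), F (x - h) - h ≤ G x ∧ G x ≤ F (x + h) + h

/-- The modified Lévy distance on `Δ⁺`. -/
noncomputable def dL (F G : ℝ → ℝ) : ℝ :=
  sInf {h : ℝ | h ∈ Set.Ioc (0 : ℝ) 1 ∧ LevyCond F G h ∧ LevyCond G F h}

/-- The distribution function `H₀`, equal to `0` on `(-∞, 0]` and `1` on `(0, ∞)`. -/
noncomputable def H0 : ℝ → ℝ := fun x => if x ≤ 0 then 0 else 1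

/-! ### Auxiliary lemmas -/

lemma levyCond_one {F G : ℝ → ℝ} (hF : IsDDF F) (hG : IsDDF G) : LevyCond F G 1 := by
  intro x _
  constructor
  · linarith [(hF.2.2.1 (x - 1)).2, (hG.2.2.1 x).1]
  · linarith [(hF.2.2.1 (x + 1)).1, (hG.2.2.1 x).2]

lemma one_mem_levySet {F G : ℝ → ℝ} (hF : IsDDF F) (hG : IsDDF G) :
    (1 : ℝ) ∈ {h : ℝ | h ∈ Set.Ioc (0 : ℝ) 1 ∧ LevyCond F G h ∧ LevyCond G F h} :=
  ⟨⟨one_pos, le_refl 1⟩, levyCond_one hF hG, levyCond_one hG hF⟩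

lemma levySet_bddBelow (F G : ℝ → ℝ) :
    BddBelow {h : ℝ | h ∈ Set.Ioc (0 : ℝ) 1 ∧ LevyCond F G h ∧ LevyCond G F h} :=
  ⟨0, fun _ hb => hb.1.1.le⟩

lemma levyCond_mono {F G : ℝ → ℝ} (hF : Monotone F) {h h' : ℝ} (h0 : 0 < h)
    (hh : h ≤ h') (hc : LevyCond F G h) : LevyCond F G h' := by
  intro x hx
  have h0' : 0 < h' := lt_of_lt_of_le h0 hh
  have hinv : 1 / h' ≤ 1 / h := one_div_le_one_div_of_le h0 hh
  have hx' : x ∈ Set.Ioo (-(1 / h)) (1 / h) :=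
    ⟨by linarith [hx.1], lt_of_lt_of_le hx.2 hinv⟩
  obtain ⟨h1, h2⟩ := hc x hx'
  constructor
  · have := hF (show x - h' ≤ x - h by linarith)
    linarith
  · have := hF (show x + h ≤ x + h' by linarith)
    linarith

lemma dL_nonneg {F G : ℝ → ℝ} (hF : IsDDF F) (hG : IsDDF G) : 0 ≤ dL F G :=
  le_csInf ⟨1, one_mem_levySet hF hG⟩ (fun _ hb => hb.1.1.le)

lemma mem_levySet_of_dL_lt {F G : ℝ → ℝ} (hF : IsDDF F) (hG : IsDDF G) {h : ℝ}
    (hlt : dL F G < h) (h1 : h ≤ 1) :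
    h ∈ {h : ℝ | h ∈ Set.Ioc (0 : ℝ) 1 ∧ LevyCond F G h ∧ LevyCond G F h} := by
  obtain ⟨h', hh', hlt'⟩ := exists_lt_of_csInf_lt ⟨1, one_mem_levySet hF hG⟩ hlt
  exact ⟨⟨lt_of_lt_of_le hh'.1.1 hlt'.le, h1⟩,
    levyCond_mono hF.1 hh'.1.1 hlt'.le hh'.2.1,
    levyCond_mono hG.1 hh'.1.1 hlt'.le hh'.2.2⟩

lemma exists_cont_point {G : ℝ → ℝ} (hG : Monotone G) {a b : ℝ} (hab : a < b) :
    ∃ y, y ∈ Set.Ioo a b ∧ ContinuousAt G y := by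
  have hc := hG.countable_not_continuousAt
  have hd : Dense {x : ℝ | ¬ContinuousAt G x}ᶜ := hc.dense_compl ℝ
  obtain ⟨y, hy1, hy2⟩ := hd.exists_mem_open isOpen_Ioo (Set.nonempty_Ioo.2 hab)
  exact ⟨y, hy2, not_not.1 hy1⟩

/-- Forward direction core: weak convergence implies the Lévy distance is eventually ≤ δ. -/
lemma eventually_dL_le (F : ℕ → ℝ → ℝ) (G : ℝ → ℝ)
    (hF : ∀ n, IsDDF (F n)) (hG : IsDDF G)
    (hw : ∀ x : ℝ, ContinuousAt G x →
        Filter.Tendsto (fun n => F n x) Filter.atTop (nhds (G x)))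
    {δ : ℝ} (hδ0 : 0 < δ) (hδ1 : δ ≤ 1) :
    ∀ᶠ n in Filter.atTop, dL (F n) G ≤ δ := by
  set d : ℝ := δ / 3 with hd_def
  have hd0 : 0 < d := by positivity
  set a : ℝ := -(1 / δ) - 1 with ha_def
  have hδinv : (0 : ℝ) < 1 / δ := by positivity
  -- choose N with a + N * d > 1/δ
  obtain ⟨N, hN⟩ := exists_nat_gt ((2 / δ + 1) / d)
  have hNd : a + N * d > 1 / δ := by
    have : (2 / δ + 1) < N * d := by
      have := (div_lt_iff₀ hd0).1 hN
      linarith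
    have h2 : 2 / δ = 1 / δ + 1 / δ := by ring
    rw [ha_def]; rw [h2] at this; linarith
  -- choose a grid of continuity points
  have hy : ∀ i : ℕ, ∃ y, y ∈ Set.Ioo (a + i * d) (a + i * d + d) ∧ ContinuousAt G y :=
    fun i => exists_cont_point hG.1 (by linarith)
  choose y hy1 hy2 using hy
  have hylt : ∀ i : ℕ, y i < y (i + 1) := by
    intro i
    have h1 := (hy1 i).2
    have h2 := (hy1 (i + 1)).1
    have : (↑(i + 1) : ℝ) = (i : ℝ) + 1 := by push_cast; ring
    rw [this] at h2
    nlinarith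
  have hy0 : y 0 < -(1 / δ) := by
    have := (hy1 0).2
    simp only [Nat.cast_zero, zero_mul, add_zero] at this
    rw [ha_def] at this
    linarith [show d ≤ 1 by rw [hd_def]; linarith]
  have hyN : 1 / δ < y N := by
    have h1 := (hy1 N).1
    calc 1 / δ < a + N * d := hNd
      _ < y N := h1
  -- eventual closeness at the grid points
  have hev : ∀ᶠ n in Filter.atTop, ∀ i ∈ Finset.range (N + 1), |F n (y i) - G (y i)| < d := by
    rw [Filter.eventually_all_finset]
    intro i _
    have ht := hw (y i) (hy2 i)
    have : ∀ᶠ n in Filter.atTop, dist (F n (y i)) (G (y i)) < d :=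
      ht (Metric.ball_mem_nhds _ hd0)
    filter_upwards [this] with n hn
    rwa [Real.dist_eq] at hn
  filter_upwards [hev] with n hn
  -- show δ is in the Lévy set for F n, G
  have hclose : ∀ i : ℕ, i ≤ N → |F n (y i) - G (y i)| < d := by
    intro i hi
    exact hn i (Finset.mem_range.2 (Nat.lt_succ_of_le hi))
  have hmem : δ ∈ {h : ℝ | h ∈ Set.Ioc (0 : ℝ) 1 ∧ LevyCond (F n) G h ∧ LevyCond G (F n) h} := by
    refine ⟨⟨hδ0, hδ1⟩, ?_, ?_⟩ <;>
    · intro x hx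
      -- find the bracketing grid points
      have hex : ∃ j : ℕ, x < y j := ⟨N, lt_trans hx.2 hyN⟩
      classical
      set j : ℕ := Nat.find hex with hj_def
      have hjspec : x < y j := Nat.find_spec hex
      have hjle : j ≤ N := Nat.find_le (lt_trans hx.2 hyN)
      have hjne : j ≠ 0 := by
        intro h0
        have : x < y 0 := by rw [← h0]; exact hjspec
        linarith [hx.1]
      obtain ⟨i, hi⟩ := Nat.exists_eq_succ_of_ne_zero hjne
      have hile : i ≤ N := by omega
      have hyix : y i ≤ x := by
        by_contra hcon
        push_neg at hcon
        exact Nat.find_min hex (by omega) hcon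
      have hgap : y j - y i < 2 * d := by
        have h1 := (hy1 j).2
        have h2 := (hy1 i).1
        have : (↑j : ℝ) = (i : ℝ) + 1 := by rw [hi]; push_cast; ring
        rw [this] at h1
        nlinarith
      have hc_i := hclose i hile
      have hc_j := hclose j hjle
      rw [abs_lt] at hc_i hc_j
      have h2dδ : 2 * d < δ := by rw [hd_def]; linarith
      have hdδ : d ≤ δ := by rw [hd_def]; linarith
      have hyjx : y j < x + δ := by linarith
      have hyixδ : x - δ < y i := by linarith
      constructor
      · -- lower bound
        first
        | -- case LevyCond (F n) G δ : F n (x - δ) - δ ≤ G x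
          calc F n (x - δ) - δ ≤ F n (y i) - δ := by
                have := (hF n).1 (le_of_lt hyixδ); linarith
            _ ≤ G (y i) + d - δ := by linarith
            _ ≤ G x + d - δ := by have := hG.1 hyix; linarith
            _ ≤ G x := by linarith
        | -- case LevyCond G (F n) δ : G (x - δ) - δ ≤ F n x
          calc G (x - δ) - δ ≤ G (y i) - δ := by
                have := hG.1 (le_of_lt hyixδ); linarith
            _ ≤ F n (y i) + d - δ := by linarith
            _ ≤ F n x + d - δ := by have := (hF n).1 hyix; linarith
            _ ≤ F n x := by linarith
      · -- upper bound
        first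
        | -- case LevyCond (F n) G δ : G x ≤ F n (x + δ) + δ
          calc G x ≤ G (y j) := hG.1 (le_of_lt hjspec)
            _ ≤ F n (y j) + d := by linarith
            _ ≤ F n (x + δ) + d := by have := (hF n).1 (le_of_lt hyjx); linarith
            _ ≤ F n (x + δ) + δ := by linarith
        | -- case LevyCond G (F n) δ : F n x ≤ G (x + δ) + δ
          calc F n x ≤ F n (y j) := (hF n).1 (le_of_lt hjspec)
            _ ≤ G (y j) + d := by linarith
            _ ≤ G (x + δ) + d := by have := hG.1 (le_of_lt hyjx); linarith
            _ ≤ G (x + δ) + δ := by linarith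
  exact csInf_le (levySet_bddBelow _ _) hmem

/-- A sequence in `Δ⁺` converges weakly to `F ∈ Δ⁺` (i.e. pointwise at
every continuity point of `F`) iff it converges to `F` in the modified Lévy distance. -/
theorem weak_convergence_iff_dL (F : ℕ → ℝ → ℝ) (G : ℝ → ℝ)
    (hF : ∀ n, IsDDF (F n)) (hG : IsDDF G) :
    (∀ x : ℝ, ContinuousAt G x →
        Filter.Tendsto (fun n => F n x) Filter.atTop (nhds (G x))) ↔
      Filter.Tendsto (fun n => dL (F n) G) Filter.atTop (nhds 0) := by
  constructor
  · -- weak convergence ⇒ dL → 0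
    intro hw
    rw [Metric.tendsto_atTop]
    intro ε hε
    set δ : ℝ := min (ε / 2) 1 with hδ_def
    have hδ0 : 0 < δ := lt_min (by linarith) one_pos
    have hδ1 : δ ≤ 1 := min_le_right _ _
    have hδε : δ < ε := lt_of_le_of_lt (min_le_left _ _) (by linarith)
    have hev := eventually_dL_le F G hF hG hw hδ0 hδ1
    rw [Filter.eventually_atTop] at hev
    obtain ⟨M, hM⟩ := hev
    refine ⟨M, fun n hn => ?_⟩
    rw [Real.dist_eq, sub_zero, abs_of_nonneg (dL_nonneg (hF n) hG)]
    exact lt_of_le_of_lt (hM n hn) hδε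
  · -- dL → 0 ⇒ weak convergence
    intro hd x hx
    rw [Metric.tendsto_atTop]
    intro ε hε
    rw [Metric.continuousAt_iff] at hx
    obtain ⟨δ₁, hδ₁0, hδ₁⟩ := hx (ε / 2) (by linarith)
    set h₀ : ℝ := min (min (δ₁ / 2) (1 / (|x| + 2))) (min 1 (ε / 2)) with hh_def
    have hx2 : (0 : ℝ) < |x| + 2 := by positivity
    have hh0 : 0 < h₀ := by
      apply lt_min (lt_min (by linarith) (by positivity)) (lt_min one_pos (by linarith))
    have hh1 : h₀ ≤ 1 := le_trans (min_le_right _ _) (min_le_left _ _)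
    have hhε : h₀ ≤ ε / 2 := le_trans (min_le_right _ _) (min_le_right _ _)
    have hhδ₁ : h₀ < δ₁ := lt_of_le_of_lt (le_trans (min_le_left _ _) (min_le_left _ _))
      (by linarith)
    have hhx : h₀ ≤ 1 / (|x| + 2) := le_trans (min_le_left _ _) (min_le_right _ _)
    have hxlt : |x| < 1 / h₀ := by
      have h1 : 1 / (1 / (|x| + 2)) ≤ 1 / h₀ := one_div_le_one_div_of_le hh0 hhx
      rw [one_div_one_div] at h1
      linarith
    obtain ⟨M, hM⟩ := Metric.tendsto_atTop.1 hd h₀ hh0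
    refine ⟨M, fun n hn => ?_⟩
    have hdlt : dL (F n) G < h₀ := by
      have := hM n hn
      rw [Real.dist_eq, sub_zero] at this
      calc dL (F n) G ≤ |dL (F n) G| := le_abs_self _
        _ < h₀ := this
    have hmem := mem_levySet_of_dL_lt (hF n) hG hdlt hh1
    have hxIoo : x ∈ Set.Ioo (-(1 / h₀)) (1 / h₀) := by
      rw [Set.mem_Ioo]
      constructor
      · have := neg_abs_le x; linarith
      · have := le_abs_self x; linarith
    obtain ⟨hlow, hhigh⟩ := hmem.2.2 x hxIoo
    have hG1 : |G (x - h₀) - G x| < ε / 2 := by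
      apply hδ₁
      rw [Real.dist_eq]
      rw [show x - h₀ - x = -h₀ by ring, abs_neg, abs_of_pos hh0]
      exact hhδ₁
    have hG2 : |G (x + h₀) - G x| < ε / 2 := by
      apply hδ₁
      rw [Real.dist_eq]
      rw [show x + h₀ - x = h₀ by ring, abs_of_pos hh0]
      exact hhδ₁
    rw [abs_lt] at hG1 hG2
    rw [Real.dist_eq, abs_lt]
    constructor
    · linarith
    · linarith
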